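/- Let d̄ be the weighted path distance with weight exp(η‖·‖)/ε on a Hilbert space, and let p_x = (1−2δ)^{1/2}x + √(2δ)ξ, p_y = (1−2δ)^{1/2}y + √(2δ)ξ be pCN proposals with shared noise ξ. Write ρ = 1 − (1−2δ)^{1/2}. Then for any x ≠ y with d̄(x,y) < 1: d̄(p_x, p_y)/d̄(x,y) ≤ (1−2δ)^{1/2}·exp(−ηρ(‖x‖∨‖y‖) + η(√(2δ)‖ξ‖ + J)), where J = ε·exp(−η·max(‖x‖∨‖y‖−ε,0)). -/

import Mathlib

open Real

/-- The weighted path distance with weight `exp(η‖·‖)/ε`: infimum over unit-speed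
`C¹` paths from `x` to `y` of `(1/ε)∫₀ᵀ exp(η‖ψ(t)‖) dt`. -/
noncomputable def pathDist {H : Type*} [NormedAddCommGroup H] [InnerProductSpace ℝ H]
    (ε η : ℝ) (x y : H) : ℝ :=
  sInf { r : ℝ | ∃ T : ℝ, 0 < T ∧ ∃ ψ ψ' : ℝ → H, ψ 0 = x ∧ ψ T = y ∧
    (∀ t ∈ Set.Icc (0:ℝ) T, HasDerivAt ψ (ψ' t) t ∧ ‖ψ' t‖ = 1) ∧
    r = (1/ε) * ∫ t in (0:ℝ)..T, exp (η * ‖ψ t‖) }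

section Aux

variable {H : Type*} [NormedAddCommGroup H] [InnerProductSpace ℝ H]

/-- The set underlying `pathDist`. -/
def pathSet (ε η : ℝ) (x y : H) : Set ℝ :=
  { r : ℝ | ∃ T : ℝ, 0 < T ∧ ∃ ψ ψ' : ℝ → H, ψ 0 = x ∧ ψ T = y ∧
    (∀ t ∈ Set.Icc (0:ℝ) T, HasDerivAt ψ (ψ' t) t ∧ ‖ψ' t‖ = 1) ∧
    r = (1/ε) * ∫ t in (0:ℝ)..T, exp (η * ‖ψ t‖) }

lemma pathDist_eq (ε η : ℝ) (x y : H) : pathDist ε η x y = sInf (pathSet ε η x y) := rfl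

lemma pathSet_mem_nonneg {ε η : ℝ} (hε : 0 < ε) {x y : H} {r : ℝ}
    (hr : r ∈ pathSet ε η x y) : 0 ≤ r := by
  obtain ⟨T, hT, ψ, ψ', h0, hTv, hd, rfl⟩ := hr
  have h1 : 0 ≤ ∫ t in (0:ℝ)..T, exp (η * ‖ψ t‖) := by
    apply intervalIntegral.integral_nonneg hT.le
    intro u _; positivity
  positivity

lemma pathSet_bddBelow {ε η : ℝ} (hε : 0 < ε) (x y : H) :
    BddBelow (pathSet ε η x y) :=
  ⟨0, fun _ hr => pathSet_mem_nonneg hε hr⟩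

lemma pathDist_nonneg {ε η : ℝ} (hε : 0 < ε) (x y : H) : 0 ≤ pathDist ε η x y :=
  Real.sInf_nonneg (fun _ hr => pathSet_mem_nonneg hε hr)

/-- Continuity of a path that has a derivative on `[0,T]`, hence integrability of
the weight along it. -/
lemma path_intervalIntegrable {η T : ℝ} (hT : 0 ≤ T) {ψ ψ' : ℝ → H}
    (hd : ∀ t ∈ Set.Icc (0:ℝ) T, HasDerivAt ψ (ψ' t) t ∧ ‖ψ' t‖ = 1) :
    IntervalIntegrable (fun t => exp (η * ‖ψ t‖)) MeasureTheory.volume 0 T := by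
  apply ContinuousOn.intervalIntegrable
  rw [Set.uIcc_of_le hT]
  have hψ : ContinuousOn ψ (Set.Icc 0 T) := fun t ht =>
    ((hd t ht).1.continuousAt).continuousWithinAt
  exact (Real.continuous_exp.comp (continuous_const.mul continuous_norm)).comp_continuousOn hψ

lemma integral_ge_const {T c : ℝ} (hT : 0 ≤ T) {f : ℝ → ℝ}
    (hf : IntervalIntegrable f MeasureTheory.volume 0 T)
    (h : ∀ t ∈ Set.Icc (0:ℝ) T, c ≤ f t) :
    T * c ≤ ∫ t in (0:ℝ)..T, f t := by
  have := intervalIntegral.integral_mono_on hT intervalIntegrable_const hf h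
  simpa [mul_comm] using this

lemma integral_le_const {T c : ℝ} (hT : 0 ≤ T) {f : ℝ → ℝ}
    (hf : IntervalIntegrable f MeasureTheory.volume 0 T)
    (h : ∀ t ∈ Set.Icc (0:ℝ) T, f t ≤ c) :
    (∫ t in (0:ℝ)..T, f t) ≤ T * c := by
  have := intervalIntegral.integral_mono_on hT hf intervalIntegrable_const h
  simpa [mul_comm] using this

/-- A unit speed path is 1-Lipschitz. -/
lemma unit_speed_lip {T : ℝ} {ψ ψ' : ℝ → H}
    (hd : ∀ t ∈ Set.Icc (0:ℝ) T, HasDerivAt ψ (ψ' t) t ∧ ‖ψ' t‖ = 1)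
    {a b : ℝ} (ha : 0 ≤ a) (hab : a ≤ b) (hb : b ≤ T) :
    ‖ψ b - ψ a‖ ≤ b - a := by
  have h1 : ∀ t ∈ Set.Icc a b, HasDerivWithinAt ψ (ψ' t) (Set.Icc a b) t := fun t ht =>
    (hd t ⟨ha.trans ht.1, ht.2.trans hb⟩).1.hasDerivWithinAt
  have h2 : ∀ t ∈ Set.Ico a b, ‖ψ' t‖ ≤ 1 := fun t ht =>
    le_of_eq (hd t ⟨ha.trans ht.1, ht.2.le.trans hb⟩).2
  have := norm_image_sub_le_of_norm_deriv_le_segment' h1 h2 b (Set.right_mem_Icc.2 hab)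
  simpa using this

/-- The straight-line path witnesses an element of `pathSet` with the obvious bound. -/
lemma exists_line_mem {ε η : ℝ} (hε : 0 < ε) (hη : 0 < η) {u v : H} (huv : u ≠ v) :
    ∃ r ∈ pathSet ε η u v, r ≤ ‖u - v‖ / ε * exp (η * max ‖u‖ ‖v‖) := by
  set L : ℝ := ‖v - u‖ with hLdef
  have hL : 0 < L := by simpa [hLdef] using sub_ne_zero.2 (Ne.symm huv)
  set d : H := L⁻¹ • (v - u) with hddef
  have hd1 : ‖d‖ = 1 := by
    rw [hddef, norm_smul, norm_inv, Real.norm_eq_abs, abs_of_pos hL]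
    field_simp
    exact hLdef.symm
  set ψ : ℝ → H := fun t => u + t • d with hψdef
  have hderiv : ∀ t ∈ Set.Icc (0:ℝ) L, HasDerivAt ψ d t ∧ ‖d‖ = 1 := by
    intro t _
    refine ⟨?_, hd1⟩
    simpa [hψdef] using (((hasDerivAt_id t).smul_const d).const_add u)
  have hψ0 : ψ 0 = u := by simp [hψdef]
  have hψL : ψ L = v := by
    simp only [hψdef, hddef, smul_smul, mul_inv_cancel₀ hL.ne']
    simp
  have hmem : (1/ε) * (∫ t in (0:ℝ)..L, exp (η * ‖ψ t‖)) ∈ pathSet ε η u v :=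
    ⟨L, hL, ψ, fun _ => d, hψ0, hψL, hderiv, rfl⟩
  refine ⟨_, hmem, ?_⟩
  have hInt := path_intervalIntegrable (η := η) hL.le hderiv
  have hbd : ∀ t ∈ Set.Icc (0:ℝ) L, exp (η * ‖ψ t‖) ≤ exp (η * max ‖u‖ ‖v‖) := by
    intro t ht
    apply Real.exp_le_exp.2
    apply mul_le_mul_of_nonneg_left _ hη.le
    set s : ℝ := t / L with hsdef
    have hs0 : 0 ≤ s := div_nonneg ht.1 hL.le
    have hs1 : s ≤ 1 := (div_le_one hL).2 ht.2
    have hrepr : ψ t = (1 - s) • u + s • v := by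
      have : t • d = s • (v - u) := by
        rw [hddef, smul_smul, hsdef, div_eq_mul_inv]
      rw [hψdef]
      simp only [this]
      module
    rw [hrepr]
    calc ‖(1 - s) • u + s • v‖ ≤ ‖(1 - s) • u‖ + ‖s • v‖ := norm_add_le _ _
      _ = (1 - s) * ‖u‖ + s * ‖v‖ := by
          rw [norm_smul, norm_smul, Real.norm_eq_abs, Real.norm_eq_abs,
            abs_of_nonneg (by linarith), abs_of_nonneg hs0]
      _ ≤ (1 - s) * max ‖u‖ ‖v‖ + s * max ‖u‖ ‖v‖ := by
          have h1 : ‖u‖ ≤ max ‖u‖ ‖v‖ := le_max_left _ _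
          have h2 : ‖v‖ ≤ max ‖u‖ ‖v‖ := le_max_right _ _
          have h3 : (0:ℝ) ≤ 1 - s := by linarith
          nlinarith
      _ = max ‖u‖ ‖v‖ := by ring
  have h2 := integral_le_const hL.le hInt hbd
  calc (1/ε) * (∫ t in (0:ℝ)..L, exp (η * ‖ψ t‖))
      ≤ (1/ε) * (L * exp (η * max ‖u‖ ‖v‖)) := by
        apply mul_le_mul_of_nonneg_left h2 (by positivity)
    _ = ‖u - v‖ / ε * exp (η * max ‖u‖ ‖v‖) := by
        rw [hLdef, norm_sub_rev]; ring

lemma pathDist_le_line {ε η : ℝ} (hε : 0 < ε) (hη : 0 < η) {u v : H} (huv : u ≠ v) :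
    pathDist ε η u v ≤ ‖u - v‖ / ε * exp (η * max ‖u‖ ‖v‖) := by
  obtain ⟨r, hr, hrle⟩ := exists_line_mem hε hη huv
  exact le_trans (csInf_le (pathSet_bddBelow hε u v) hr) hrle

/-- The key lower bound for small elements of the path set. -/
lemma lower_mem {ε η : ℝ} (hε : 0 < ε) (hη : 0 < η) {x y : H} {r : ℝ}
    (hr : r ∈ pathSet ε η x y) (hr1 : r < 1) :
    ‖x - y‖ / ε *
      exp (η * (max ‖x‖ ‖y‖ - ε * exp (-η * max (max ‖x‖ ‖y‖ - ε) 0))) ≤ r := by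
  obtain ⟨T, hT, ψ, ψ', h0, hTv, hd, rfl⟩ := hr
  set M : ℝ := max ‖x‖ ‖y‖ with hMdef
  set J : ℝ := ε * exp (-η * max (M - ε) 0) with hJdef
  set I : ℝ := ∫ t in (0:ℝ)..T, exp (η * ‖ψ t‖) with hIdef
  have hInt := path_intervalIntegrable (η := η) hT.le hd
  have hIlt : I < ε := by
    have : I / ε < 1 := by rw [div_eq_inv_mul, ← one_div]; exact hr1
    exact (div_lt_one hε).1 this
  -- lower bound on the norm along the path
  have hlow : ∀ t ∈ Set.Icc (0:ℝ) T, M - T ≤ ‖ψ t‖ := by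
    intro t ht
    rcases max_cases ‖x‖ ‖y‖ with ⟨hM, _⟩ | ⟨hM, _⟩
    · have h1 : ‖ψ t - ψ 0‖ ≤ t - 0 := unit_speed_lip hd le_rfl ht.1 ht.2
      have h2 : ‖x‖ - ‖ψ t‖ ≤ ‖x - ψ t‖ := norm_sub_norm_le _ _
      have h3 : ‖x - ψ t‖ = ‖ψ t - ψ 0‖ := by rw [h0, norm_sub_rev]
      rw [hMdef, hM]
      have := ht.2
      linarith
    · have h1 : ‖ψ T - ψ t‖ ≤ T - t := unit_speed_lip hd ht.1 ht.2 le_rfl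
      have h2 : ‖y‖ - ‖ψ t‖ ≤ ‖y - ψ t‖ := norm_sub_norm_le _ _
      have h3 : ‖y - ψ t‖ = ‖ψ T - ψ t‖ := by rw [hTv]
      rw [hMdef, hM]
      have := ht.1
      linarith
  -- Step 1 : T < ε
  have hTε : T < ε := by
    by_contra hcon
    push_neg at hcon
    have h1 : T * 1 ≤ I := by
      apply integral_ge_const hT.le hInt
      intro t _
      exact Real.one_le_exp (by positivity)
    rw [mul_one] at h1
    linarith
  -- Step 2 : T ≤ J
  have hK : ∀ t ∈ Set.Icc (0:ℝ) T, exp (η * max (M - ε) 0) ≤ exp (η * ‖ψ t‖) := by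
    intro t ht
    apply Real.exp_le_exp.2
    apply mul_le_mul_of_nonneg_left _ hη.le
    refine max_le ?_ (norm_nonneg _)
    have := hlow t ht
    linarith
  have hTK : T * exp (η * max (M - ε) 0) ≤ I := integral_ge_const hT.le hInt hK
  have hTJ : T ≤ J := by
    have hKpos : 0 < exp (η * max (M - ε) 0) := Real.exp_pos _
    have h5 : T < ε / exp (η * max (M - ε) 0) := by
      rw [lt_div_iff₀ hKpos]; linarith
    rw [hJdef, show -η * max (M - ε) 0 = -(η * max (M - ε) 0) by ring,
      Real.exp_neg, ← div_eq_mul_inv]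
    exact h5.le
  -- Step 3 : the final bound
  have hfin : ∀ t ∈ Set.Icc (0:ℝ) T, exp (η * (M - J)) ≤ exp (η * ‖ψ t‖) := by
    intro t ht
    apply Real.exp_le_exp.2
    apply mul_le_mul_of_nonneg_left _ hη.le
    have := hlow t ht
    linarith
  have hTI : T * exp (η * (M - J)) ≤ I := integral_ge_const hT.le hInt hfin
  have hLT : ‖x - y‖ ≤ T := by
    have := unit_speed_lip hd le_rfl hT.le le_rfl
    rw [hTv, h0, norm_sub_rev] at this
    simpa using this
  calc ‖x - y‖ / ε * exp (η * (M - J))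
      = (1/ε) * (‖x - y‖ * exp (η * (M - J))) := by ring
    _ ≤ (1/ε) * (T * exp (η * (M - J))) := by
        apply mul_le_mul_of_nonneg_left _ (by positivity)
        exact mul_le_mul_of_nonneg_right hLT (Real.exp_pos _).le
    _ ≤ (1/ε) * I := mul_le_mul_of_nonneg_left hTI (by positivity)

lemma pathDist_lower {ε η : ℝ} (hε : 0 < ε) (hη : 0 < η) {x y : H} (hxy : x ≠ y)
    (hsmall : pathDist ε η x y < 1) :
    ‖x - y‖ / ε *
      exp (η * (max ‖x‖ ‖y‖ - ε * exp (-η * max (max ‖x‖ ‖y‖ - ε) 0)))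
      ≤ pathDist ε η x y := by
  obtain ⟨r0, hr0mem, _⟩ := exists_line_mem hε hη hxy
  have hne : (pathSet ε η x y).Nonempty := ⟨r0, hr0mem⟩
  rw [pathDist_eq] at hsmall ⊢
  obtain ⟨r1, hr1mem, hr1lt⟩ := exists_lt_of_csInf_lt hne hsmall
  have hc1 := lower_mem hε hη hr1mem hr1lt
  apply le_csInf hne
  intro r hr
  rcases lt_or_ge r 1 with h | h
  · exact lower_mem hε hη hr h
  · linarith
  
/-- The weighted path distance from a point to itself vanishes. -/
lemma pathDist_self {ε η : ℝ} (hε : 0 < ε) (hη : 0 < η) (p : H) :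
    pathDist ε η p p = 0 := by
  refine le_antisymm ?_ (pathDist_nonneg hε p p)
  rcases Set.eq_empty_or_nonempty (pathSet ε η p p) with he | hne
  · rw [pathDist_eq, he, Real.sInf_empty]
  · by_contra hcon
    push_neg at hcon
    set D : ℝ := pathDist ε η p p with hDdef
    have hD : 0 < D := hcon
    obtain ⟨r0, T, hT, ψ, ψ', h0, hTv, hd, hr0⟩ := hne
    set C : ℝ := exp (η * (‖p‖ + T)) with hCdef
    have hC : 0 < C := Real.exp_pos _
    set l : ℝ := min 1 (D * ε / (2 * T * C)) with hldef
    have hl0 : 0 < l := lt_min one_pos (by positivity)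
    have hl1 : l ≤ 1 := min_le_left _ _
    -- the rescaled loop
    set φ : ℝ → H := fun t => p + l • (ψ (t / l) - p) with hφdef
    set φ' : ℝ → H := fun t => ψ' (t / l) with hφ'def
    have hmemIcc : ∀ t ∈ Set.Icc (0:ℝ) (l * T), t / l ∈ Set.Icc (0:ℝ) T := by
      intro t ht
      constructor
      · exact div_nonneg ht.1 hl0.le
      · rw [div_le_iff₀ hl0]
        calc t ≤ l * T := ht.2
          _ = T * l := mul_comm _ _
    have hderiv : ∀ t ∈ Set.Icc (0:ℝ) (l * T),
        HasDerivAt φ (φ' t) t ∧ ‖φ' t‖ = 1 := by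
      intro t ht
      have ht' := hmemIcc t ht
      have h1 : HasDerivAt (fun s : ℝ => s / l) (1 / l) t := by
        simpa using (hasDerivAt_id t).div_const l
      have h2 : HasDerivAt (fun s : ℝ => ψ (s / l)) ((1 / l) • ψ' (t / l)) t :=
        (hd (t / l) ht').1.scomp t h1
      have h3 : HasDerivAt (fun s : ℝ => l • (ψ (s / l) - p))
          (l • ((1 / l) • ψ' (t / l))) t := (h2.sub_const p).const_smul l
      have h4 : l • ((1 / l) • ψ' (t / l)) = ψ' (t / l) := by
        rw [smul_smul, mul_one_div, div_self hl0.ne', one_smul]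
      rw [h4] at h3
      exact ⟨h3.const_add p, (hd (t / l) ht').2⟩
    have hφ0 : φ 0 = p := by
      simp [hφdef, zero_div, h0]
    have hφT : φ (l * T) = p := by
      have : l * T / l = T := by
        rw [mul_comm, mul_div_assoc, div_self hl0.ne', mul_one]
      simp [hφdef, this, hTv]
    have hTl : 0 < l * T := by positivity
    have hmem : (1/ε) * (∫ t in (0:ℝ)..(l*T), exp (η * ‖φ t‖)) ∈ pathSet ε η p p :=
      ⟨l * T, hTl, φ, φ', hφ0, hφT, hderiv, rfl⟩
    -- bound the cost of the rescaled loop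
    have hInt := path_intervalIntegrable (η := η) hTl.le hderiv
    have hbd : ∀ t ∈ Set.Icc (0:ℝ) (l * T), exp (η * ‖φ t‖) ≤ C := by
      intro t ht
      rw [hCdef]
      apply Real.exp_le_exp.2
      apply mul_le_mul_of_nonneg_left _ hη.le
      have ht' := hmemIcc t ht
      have hlip : ‖ψ (t / l) - ψ 0‖ ≤ t / l - 0 := unit_speed_lip hd le_rfl ht'.1 ht'.2
      rw [h0, sub_zero] at hlip
      calc ‖φ t‖ ≤ ‖p‖ + ‖l • (ψ (t / l) - p)‖ := norm_add_le _ _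
        _ = ‖p‖ + l * ‖ψ (t / l) - p‖ := by
            rw [norm_smul, Real.norm_eq_abs, abs_of_pos hl0]
        _ ≤ ‖p‖ + l * (t / l) := by
            gcongr
        _ = ‖p‖ + t := by field_simp
        _ ≤ ‖p‖ + T := by
            have h1 : t ≤ l * T := ht.2
            nlinarith
    have hIle := integral_le_const hTl.le hInt hbd
    have hval : (1/ε) * (∫ t in (0:ℝ)..(l*T), exp (η * ‖φ t‖)) ≤ D / 2 := by
      calc (1/ε) * (∫ t in (0:ℝ)..(l*T), exp (η * ‖φ t‖))
          ≤ (1/ε) * (l * T * C) := mul_le_mul_of_nonneg_left hIle (by positivity)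
        _ ≤ (1/ε) * ((D * ε / (2 * T * C)) * T * C) := by
            apply mul_le_mul_of_nonneg_left _ (by positivity)
            have hmin : l ≤ D * ε / (2 * T * C) := min_le_right _ _
            exact mul_le_mul_of_nonneg_right
              (mul_le_mul_of_nonneg_right hmin hT.le) hC.le
        _ = D / 2 := by field_simp
    have : D ≤ D / 2 :=
      le_trans (by rw [hDdef, pathDist_eq]; exact csInf_le (pathSet_bddBelow hε p p) hmem) hval
    linarith

end Aux

/-- For pCN proposals `p_x = (1−2δ)^{1/2}x + √(2δ)ξ`, `p_y = (1−2δ)^{1/2}y + √(2δ)ξ`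
with shared noise, whenever `x ≠ y` and `d̄(x,y) < 1`:
`d̄(p_x,p_y)/d̄(x,y) ≤ (1−2δ)^{1/2} exp(−ηρ(‖x‖∨‖y‖) + η(√(2δ)‖ξ‖ + J))`, where
`ρ = 1 − (1−2δ)^{1/2}` and `J = ε exp(−η max(‖x‖∨‖y‖ − ε, 0))`. -/
theorem stmt_16 {H : Type*} [NormedAddCommGroup H] [InnerProductSpace ℝ H]
    (ε η δ : ℝ) (hε : 0 < ε) (hη : 0 < η) (hδ : δ ∈ Set.Ioc (0:ℝ) (1/2))
    (x y ξ : H) (hxy : x ≠ y)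
    (hsmall : pathDist ε η x y < 1) :
    pathDist ε η (Real.sqrt (1 - 2*δ) • x + Real.sqrt (2*δ) • ξ)
        (Real.sqrt (1 - 2*δ) • y + Real.sqrt (2*δ) • ξ)
      / pathDist ε η x y
      ≤ Real.sqrt (1 - 2*δ) *
          exp (-η * (1 - Real.sqrt (1 - 2*δ)) * max ‖x‖ ‖y‖
            + η * (Real.sqrt (2*δ) * ‖ξ‖ + ε * exp (-η * max (max ‖x‖ ‖y‖ - ε) 0))) := by
  set M : ℝ := max ‖x‖ ‖y‖ with hMdef
  set J : ℝ := ε * exp (-η * max (M - ε) 0) with hJdef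
  set a : ℝ := Real.sqrt (1 - 2*δ) with hadef
  set b : ℝ := Real.sqrt (2*δ) with hbdef
  rcases eq_or_lt_of_le hδ.2 with hhalf | hlt
  · -- δ = 1/2 : the two proposals coincide and the RHS prefactor is 0
    have h0 : (1 : ℝ) - 2*δ = 0 := by rw [hhalf]; norm_num
    have ha0 : a = 0 := by rw [hadef, h0, Real.sqrt_zero]
    rw [ha0]
    simp only [zero_smul, zero_add, zero_mul]
    rw [pathDist_self hε hη, zero_div]
  · -- δ < 1/2
    have h2δ : 0 < 1 - 2*δ := by linarith
    have ha : 0 < a := Real.sqrt_pos.2 h2δ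
    have hb : 0 ≤ b := Real.sqrt_nonneg _
    have hL : 0 < ‖x - y‖ := by simpa using sub_ne_zero.2 hxy
    set L : ℝ := ‖x - y‖ with hLdef
    -- the proposals
    set px : H := a • x + b • ξ with hpxdef
    set py : H := a • y + b • ξ with hpydef
    have hpxy : px - py = a • (x - y) := by rw [hpxdef, hpydef]; module
    have hpne : px ≠ py := by
      intro hcon
      apply hxy
      have : a • (x - y) = 0 := by rw [← hpxy, hcon, sub_self]
      rcases smul_eq_zero.1 this with h | h
      · exact absurd h ha.ne'
      · exact sub_eq_zero.1 h
    have hpnorm : ‖px - py‖ = a * L := by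
      rw [hpxy, norm_smul, Real.norm_eq_abs, abs_of_pos ha, hLdef]
    have hN : max ‖px‖ ‖py‖ ≤ a * M + b * ‖ξ‖ := by
      have hx' : ‖px‖ ≤ a * M + b * ‖ξ‖ := by
        calc ‖px‖ ≤ ‖a • x‖ + ‖b • ξ‖ := norm_add_le _ _
          _ = a * ‖x‖ + b * ‖ξ‖ := by
              rw [norm_smul, norm_smul, Real.norm_eq_abs, Real.norm_eq_abs,
                abs_of_pos ha, abs_of_nonneg hb]
          _ ≤ a * M + b * ‖ξ‖ := by gcongr; exact le_max_left _ _
      have hy' : ‖py‖ ≤ a * M + b * ‖ξ‖ := by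
        calc ‖py‖ ≤ ‖a • y‖ + ‖b • ξ‖ := norm_add_le _ _
          _ = a * ‖y‖ + b * ‖ξ‖ := by
              rw [norm_smul, norm_smul, Real.norm_eq_abs, Real.norm_eq_abs,
                abs_of_pos ha, abs_of_nonneg hb]
          _ ≤ a * M + b * ‖ξ‖ := by gcongr; exact le_max_right _ _
      exact max_le hx' hy'
    -- lower bound for the denominator
    set c : ℝ := L / ε * exp (η * (M - J)) with hcdef
    have hclow : c ≤ pathDist ε η x y := pathDist_lower hε hη hxy hsmall
    have hcpos : 0 < c := by rw [hcdef]; positivity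
    have hdpos : 0 < pathDist ε η x y := lt_of_lt_of_le hcpos hclow
    -- upper bound for the numerator
    have hup : pathDist ε η px py ≤ a * L / ε * exp (η * (a * M + b * ‖ξ‖)) := by
      calc pathDist ε η px py ≤ ‖px - py‖ / ε * exp (η * max ‖px‖ ‖py‖) :=
            pathDist_le_line hε hη hpne
        _ = a * L / ε * exp (η * max ‖px‖ ‖py‖) := by rw [hpnorm]
        _ ≤ a * L / ε * exp (η * (a * M + b * ‖ξ‖)) := by
            apply mul_le_mul_of_nonneg_left _ (by positivity)
            exact Real.exp_le_exp.2 (mul_le_mul_of_nonneg_left hN hη.le)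
    -- put everything together
    set R : ℝ := a * exp (-η * (1 - a) * M + η * (b * ‖ξ‖ + J)) with hRdef
    have hR0 : 0 ≤ R := by rw [hRdef]; positivity
    rw [div_le_iff₀ hdpos]
    have hexp : exp (-η * (1 - a) * M + η * (b * ‖ξ‖ + J)) * exp (η * (M - J))
        = exp (η * (a * M + b * ‖ξ‖)) := by
      rw [← Real.exp_add]; congr 1; ring
    have hRc : R * c = a * L / ε * exp (η * (a * M + b * ‖ξ‖)) := by
      rw [hRdef, hcdef, ← hexp]; ring
    calc pathDist ε η px py ≤ a * L / ε * exp (η * (a * M + b * ‖ξ‖)) := hup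
      _ = R * c := hRc.symm
      _ ≤ R * pathDist ε η x y := mul_le_mul_of_nonneg_left hclow hR0
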